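/- Let b₁,…,b_d be nonnegative integers and let N be a d×d complex matrix. Then ‖DSplit_{b₁,…,b_d}(N)‖_F ≤ 2·√(2^{b₁}+…+2^{b_d})·‖N‖_op, where ‖N‖_op is the operator (spectral) norm. -/

import Mathlib

set_option synthInstance.maxHeartbeats 1000000
set_option maxHeartbeats 1000000

open Matrix BigOperators

/-- The index set of `Split`: pairs `(j, s)` with `j ∈ [d]` and `s ∈ {0,1}^{b j}`. -/
abbrev SIdx (d : ℕ) (b : Fin d → ℕ) := Σ j : Fin d, Fin (b j) → Bool

/-- `s` is a prefix of `t` (as bit strings). -/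
def BitPrefix {a c : ℕ} (s : Fin a → Bool) (t : Fin c → Bool) : Prop :=
  ∃ h : a ≤ c, ∀ i : Fin a, t (Fin.castLE h i) = s i

open scoped Classical in
/-- The splitting map `Split_{b₁,…,b_d}`: the entry at `((j₁,s₁),(j₂,s₂))` is
`M_{j₁ j₂} / 2^{max(b_{j₁}, b_{j₂})}` if one of `s₁, s₂` is a prefix of the other,
and `0` otherwise. -/
noncomputable def Split {d : ℕ} (b : Fin d → ℕ) (M : Matrix (Fin d) (Fin d) ℂ) :
    Matrix (SIdx d b) (SIdx d b) ℂ := fun p q =>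
  if BitPrefix p.2 q.2 ∨ BitPrefix q.2 p.2 then
    M p.1 q.1 / 2 ^ max (b p.1) (b q.1) else 0

open scoped Classical in
/-- The dual splitting map `DSplit_{b₁,…,b_d}`: the entry at `((j₁,s₁),(j₂,s₂))` is
`N_{j₁ j₂}` if one of `s₁, s₂` is a prefix of the other, and `0` otherwise. -/
noncomputable def DSplit {d : ℕ} (b : Fin d → ℕ) (N : Matrix (Fin d) (Fin d) ℂ) :
    Matrix (SIdx d b) (SIdx d b) ℂ := fun p q =>
  if BitPrefix p.2 q.2 ∨ BitPrefix q.2 p.2 then N p.1 q.1 else 0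

/-- Frobenius norm of a matrix. -/
noncomputable def frobNorm {n m : Type*} [Fintype n] [Fintype m] (A : Matrix n m ℂ) : ℝ :=
  Real.sqrt (∑ i, ∑ j, ‖A i j‖ ^ 2)

/-- Operator (spectral) norm of a matrix. -/
noncomputable def opNorm {n : Type*} [Fintype n] [DecidableEq n] (A : Matrix n n ℂ) : ℝ :=
  ‖(Matrix.toEuclideanCLM (𝕜 := ℂ) A : EuclideanSpace ℂ n →L[ℂ] EuclideanSpace ℂ n)‖

open scoped Classical

lemma col_sq_le {d : ℕ} (N : Matrix (Fin d) (Fin d) ℂ) (j : Fin d) :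
    ∑ i, ‖N i j‖ ^ 2 ≤ opNorm N ^ 2 := by
  set T := (Matrix.toEuclideanCLM (𝕜 := ℂ) N) with hT
  set v : EuclideanSpace ℂ (Fin d) := EuclideanSpace.single j 1 with hv
  have hvn : ‖v‖ = 1 := by simp [hv, EuclideanSpace.norm_single]
  have happ : ∀ i, T v i = N i j := by
    intro i
    have := Matrix.ofLp_toEuclideanCLM (𝕜 := ℂ) N v
    have h2 : T v i = Matrix.toLin' N (WithLp.equiv _ _ v) i := by
      rfl
    rw [h2]
    simp [Matrix.toLin'_apply, Matrix.mulVec, dotProduct, hv,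
      EuclideanSpace.single_apply, Pi.single_apply]
  have hnorm : ‖T v‖ ^ 2 = ∑ i, ‖N i j‖ ^ 2 := by
    rw [EuclideanSpace.norm_eq, Real.sq_sqrt (by positivity)]
    simp [happ]
  rw [← hnorm]
  have : ‖T v‖ ≤ opNorm N := by
    calc ‖T v‖ ≤ ‖T‖ * ‖v‖ := T.le_opNorm v
    _ = opNorm N := by rw [hvn, mul_one, hT]; rfl
  exact pow_le_pow_left₀ (norm_nonneg _) this 2

lemma opNorm_conjTranspose {d : ℕ} (N : Matrix (Fin d) (Fin d) ℂ) :
    opNorm Nᴴ = opNorm N := by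
  unfold opNorm
  rw [show Nᴴ = star N from rfl, map_star]
  rw [ContinuousLinearMap.star_eq_adjoint]
  exact LinearIsometryEquiv.norm_map ContinuousLinearMap.adjoint _

lemma row_sq_le {d : ℕ} (N : Matrix (Fin d) (Fin d) ℂ) (i : Fin d) :
    ∑ j, ‖N i j‖ ^ 2 ≤ opNorm N ^ 2 := by
  have := col_sq_le Nᴴ i
  rw [opNorm_conjTranspose] at this
  simpa [Matrix.conjTranspose_apply] using this

lemma bitPrefix_unique {a c : ℕ} {s₂ : Fin c → Bool} {s₁ s₁' : Fin a → Bool}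
    (h : BitPrefix s₁ s₂) (h' : BitPrefix s₁' s₂) : s₁ = s₁' := by
  obtain ⟨ha, hs⟩ := h; obtain ⟨_, hs'⟩ := h'
  funext i; rw [← hs i, ← hs' i]

lemma sum_ind_le {a c : ℕ} {x : ℝ} (hx : 0 ≤ x) (s₂ : Fin c → Bool) :
    ∑ s₁ : Fin a → Bool, (if BitPrefix s₁ s₂ then x else 0) ≤ x := by
  by_cases h : ∃ s₀ : Fin a → Bool, BitPrefix s₀ s₂
  · obtain ⟨s₀, hs₀⟩ := h
    have heq : ∀ s₁ : Fin a → Bool, BitPrefix s₁ s₂ ↔ s₁ = s₀ :=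
      fun s₁ => ⟨fun h => bitPrefix_unique h hs₀, fun h => h ▸ hs₀⟩
    simp only [heq]
    rw [Finset.sum_ite_eq' Finset.univ s₀ (fun _ => x)]
    simp
  · push_neg at h
    simp [h, hx]

lemma count_le {a c : ℕ} {x : ℝ} (hx : 0 ≤ x) :
    ∑ s₁ : Fin a → Bool, ∑ s₂ : Fin c → Bool,
      (if BitPrefix s₁ s₂ ∨ BitPrefix s₂ s₁ then x else 0)
      ≤ ((2 : ℝ) ^ a + 2 ^ c) * x := by
  have step : ∀ (s₁ : Fin a → Bool) (s₂ : Fin c → Bool),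
      (if BitPrefix s₁ s₂ ∨ BitPrefix s₂ s₁ then x else 0)
      ≤ (if BitPrefix s₁ s₂ then x else 0) + (if BitPrefix s₂ s₁ then x else 0) := by
    intro s₁ s₂
    by_cases h1 : BitPrefix s₁ s₂ <;> by_cases h2 : BitPrefix s₂ s₁ <;>
      simp [h1, h2, hx]
  calc ∑ s₁ : Fin a → Bool, ∑ s₂ : Fin c → Bool,
        (if BitPrefix s₁ s₂ ∨ BitPrefix s₂ s₁ then x else 0)
      ≤ ∑ s₁ : Fin a → Bool, ∑ s₂ : Fin c → Bool,
        ((if BitPrefix s₁ s₂ then x else 0) + (if BitPrefix s₂ s₁ then x else 0)) :=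
        Finset.sum_le_sum fun s₁ _ => Finset.sum_le_sum fun s₂ _ => step s₁ s₂
    _ = (∑ s₂ : Fin c → Bool, ∑ s₁ : Fin a → Bool, (if BitPrefix s₁ s₂ then x else 0))
        + ∑ s₁ : Fin a → Bool, ∑ s₂ : Fin c → Bool, (if BitPrefix s₂ s₁ then x else 0) := by
        simp only [Finset.sum_add_distrib]
        congr 1
        exact Finset.sum_comm
    _ ≤ (∑ _s₂ : Fin c → Bool, x) + ∑ _s₁ : Fin a → Bool, x := by
        gcongr with s₂ _ s₁ _
        · exact sum_ind_le hx s₂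
        · exact sum_ind_le hx s₁
    _ = (2 : ℝ) ^ c * x + 2 ^ a * x := by
        simp [Finset.sum_const, Finset.card_univ, mul_comm]
    _ = ((2 : ℝ) ^ a + 2 ^ c) * x := by ring

/-- `‖DSplit_b(N)‖_F ≤ 2·√(2^{b₁}+…+2^{b_d})·‖N‖_op`. -/
theorem frobNorm_dsplit_le {d : ℕ} (b : Fin d → ℕ) (N : Matrix (Fin d) (Fin d) ℂ) :
    frobNorm (DSplit b N) ≤ 2 * Real.sqrt (∑ j : Fin d, (2 : ℝ) ^ (b j)) * opNorm N := by
  set C := opNorm N with hC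
  have hC0 : 0 ≤ C := norm_nonneg _
  set SS : ℝ := ∑ j : Fin d, (2 : ℝ) ^ (b j) with hSS
  have hSS0 : 0 ≤ SS := by positivity
  set S : ℝ := ∑ p : SIdx d b, ∑ q : SIdx d b, ‖DSplit b N p q‖ ^ 2 with hS
  have hsig : ∀ (f : SIdx d b → ℝ), ∑ p : SIdx d b, f p
      = ∑ j : Fin d, ∑ s : Fin (b j) → Bool, f ⟨j, s⟩ := by
    intro f
    rw [← Finset.univ_sigma_univ, Finset.sum_sigma]
  have hentry : ∀ (j₁ j₂ : Fin d) (s₁ : Fin (b j₁) → Bool) (s₂ : Fin (b j₂) → Bool),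
      ‖DSplit b N ⟨j₁, s₁⟩ ⟨j₂, s₂⟩‖ ^ 2
      = if BitPrefix s₁ s₂ ∨ BitPrefix s₂ s₁ then ‖N j₁ j₂‖ ^ 2 else 0 := by
    intro j₁ j₂ s₁ s₂
    unfold DSplit
    split <;> simp
  have hSle : S ≤ 2 * SS * C ^ 2 := by
    have h1 : S = ∑ j₁ : Fin d, ∑ j₂ : Fin d, ∑ s₁ : Fin (b j₁) → Bool,
        ∑ s₂ : Fin (b j₂) → Bool,
        (if BitPrefix s₁ s₂ ∨ BitPrefix s₂ s₁ then ‖N j₁ j₂‖ ^ 2 else 0) := by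
      rw [hS, hsig]
      refine Finset.sum_congr rfl fun j₁ _ => ?_
      rw [show (∑ s₁ : Fin (b j₁) → Bool, ∑ q : SIdx d b, ‖DSplit b N ⟨j₁, s₁⟩ q‖ ^ 2)
          = ∑ s₁ : Fin (b j₁) → Bool, ∑ j₂ : Fin d, ∑ s₂ : Fin (b j₂) → Bool,
            (if BitPrefix s₁ s₂ ∨ BitPrefix s₂ s₁ then ‖N j₁ j₂‖ ^ 2 else 0) from
        Finset.sum_congr rfl fun s₁ _ => by
          rw [hsig]
          exact Finset.sum_congr rfl fun j₂ _ =>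
            Finset.sum_congr rfl fun s₂ _ => hentry j₁ j₂ s₁ s₂]
      exact Finset.sum_comm
    have h2 : S ≤ ∑ j₁ : Fin d, ∑ j₂ : Fin d,
        ((2 : ℝ) ^ (b j₁) + 2 ^ (b j₂)) * ‖N j₁ j₂‖ ^ 2 := by
      rw [h1]
      exact Finset.sum_le_sum fun j₁ _ => Finset.sum_le_sum fun j₂ _ =>
        count_le (by positivity)
    refine h2.trans ?_
    have h3 : ∑ j₁ : Fin d, ∑ j₂ : Fin d,
        ((2 : ℝ) ^ (b j₁) + 2 ^ (b j₂)) * ‖N j₁ j₂‖ ^ 2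
        = (∑ j₁ : Fin d, (2 : ℝ) ^ (b j₁) * ∑ j₂ : Fin d, ‖N j₁ j₂‖ ^ 2)
        + ∑ j₂ : Fin d, (2 : ℝ) ^ (b j₂) * ∑ j₁ : Fin d, ‖N j₁ j₂‖ ^ 2 := by
      simp only [add_mul, Finset.sum_add_distrib, Finset.mul_sum]
      congr 1
      exact Finset.sum_comm
    rw [h3]
    have hrow : (∑ j₁ : Fin d, (2 : ℝ) ^ (b j₁) * ∑ j₂ : Fin d, ‖N j₁ j₂‖ ^ 2)
        ≤ ∑ j₁ : Fin d, (2 : ℝ) ^ (b j₁) * C ^ 2 :=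
      Finset.sum_le_sum fun j₁ _ =>
        mul_le_mul_of_nonneg_left (row_sq_le N j₁) (by positivity)
    have hcol : (∑ j₂ : Fin d, (2 : ℝ) ^ (b j₂) * ∑ j₁ : Fin d, ‖N j₁ j₂‖ ^ 2)
        ≤ ∑ j₂ : Fin d, (2 : ℝ) ^ (b j₂) * C ^ 2 :=
      Finset.sum_le_sum fun j₂ _ =>
        mul_le_mul_of_nonneg_left (col_sq_le N j₂) (by positivity)
    calc _ ≤ (∑ j₁ : Fin d, (2 : ℝ) ^ (b j₁) * C ^ 2)
          + ∑ j₂ : Fin d, (2 : ℝ) ^ (b j₂) * C ^ 2 := add_le_add hrow hcol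
      _ = 2 * SS * C ^ 2 := by rw [← Finset.sum_mul, ← hSS]; ring
  have hkey : S ≤ (2 * Real.sqrt SS * C) ^ 2 := by
    have hsq : (2 * Real.sqrt SS * C) ^ 2 = 4 * SS * C ^ 2 := by
      rw [mul_pow, mul_pow, Real.sq_sqrt hSS0]; ring
    rw [hsq]
    nlinarith [mul_nonneg hSS0 (sq_nonneg C)]
  have hfr : frobNorm (DSplit b N) = Real.sqrt S := rfl
  rw [hfr]
  calc Real.sqrt S ≤ Real.sqrt ((2 * Real.sqrt SS * C) ^ 2) := Real.sqrt_le_sqrt hkey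
    _ = 2 * Real.sqrt SS * C := Real.sqrt_sq (by positivity)
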